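/- Consider the composite function f = h ∘ c and let x̄ be a stationary point of f. If the Clarke subdifferential map ∂f is metrically subregular at (x̄, 0) with modulus κ, then for every ε̄ > 0 there exists τ > 0 such that dist(x, (∂f)⁻¹(0)) ≤ ((3Lβε + 2)κ + 2ε)·‖G(x, ε)‖ for all x with ‖x − x̄‖ < τ and all ε ∈ (0, ε̄), where ‖G(x, ε)‖ denotes the norm of the unique element of G(x, ε). -/

import Mathlib

open Filter Topology Set
open scoped RealInnerProductSpace NNReal

noncomputable section

/-- The subdifferential (in the sense of convex analysis) of `h` at `u`. -/
def convexSubdiff {m : ℕ} (h : EuclideanSpace ℝ (Fin m) → ℝ)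
    (u : EuclideanSpace ℝ (Fin m)) : Set (EuclideanSpace ℝ (Fin m)) :=
  {v | ∀ z, h u + ⟪v, z - u⟫ ≤ h z}

/-- `∇c(x)`, the transpose (adjoint) of the Jacobian of `c` at `x`, acting `ℝᵐ → ℝⁿ`. -/
def nablaC {n m : ℕ}
    (c' : EuclideanSpace ℝ (Fin n) → (EuclideanSpace ℝ (Fin n) →L[ℝ] EuclideanSpace ℝ (Fin m)))
    (x : EuclideanSpace ℝ (Fin n)) :
    EuclideanSpace ℝ (Fin m) →L[ℝ] EuclideanSpace ℝ (Fin n) :=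
  ContinuousLinearMap.adjoint (c' x)

/-- The Clarke subdifferential of the composite `f = h ∘ c`:  `∂f(x) = ∇c(x) ∂h(c(x))`. -/
def compSubdiff {n m : ℕ} (c : EuclideanSpace ℝ (Fin n) → EuclideanSpace ℝ (Fin m))
    (c' : EuclideanSpace ℝ (Fin n) → (EuclideanSpace ℝ (Fin n) →L[ℝ] EuclideanSpace ℝ (Fin m)))
    (h : EuclideanSpace ℝ (Fin m) → ℝ) (x : EuclideanSpace ℝ (Fin n)) :
    Set (EuclideanSpace ℝ (Fin n)) :=
  (fun v => nablaC c' x v) '' convexSubdiff h (c x)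

/-- `y` belongs to the effective domain of the Fenchel conjugate `h*`. -/
def inDomStar {m : ℕ} (h : EuclideanSpace ℝ (Fin m) → ℝ)
    (y : EuclideanSpace ℝ (Fin m)) : Prop :=
  BddAbove (Set.range fun z => ⟪y, z⟫ - h z)

/-- The Fenchel conjugate `h*(y) = sup_z {⟨y, z⟩ − h(z)}` (real-valued on its domain). -/
def fenchelConj {m : ℕ} (h : EuclideanSpace ℝ (Fin m) → ℝ)
    (y : EuclideanSpace ℝ (Fin m)) : ℝ :=
  ⨆ z, (⟪y, z⟫ - h z)

/-- The dual regularized solution set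
`Y^ε(x) = argmax_y {yᵀc(x) − h*(y) − (ε/2)‖∇c(x) y‖²}`
(the maximization being over the effective domain of `h*`). -/
def regDual {n m : ℕ} (c : EuclideanSpace ℝ (Fin n) → EuclideanSpace ℝ (Fin m))
    (c' : EuclideanSpace ℝ (Fin n) → (EuclideanSpace ℝ (Fin n) →L[ℝ] EuclideanSpace ℝ (Fin m)))
    (h : EuclideanSpace ℝ (Fin m) → ℝ) (ε : ℝ) (x : EuclideanSpace ℝ (Fin n)) :
    Set (EuclideanSpace ℝ (Fin m)) :=
  {y | inDomStar h y ∧ ∀ y', inDomStar h y' →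
    ⟪y', c x⟫ - fenchelConj h y' - ε / 2 * ‖nablaC c' x y'‖ ^ 2 ≤
      ⟪y, c x⟫ - fenchelConj h y - ε / 2 * ‖nablaC c' x y‖ ^ 2}

/-- The subgradient-regularized map `G(x, ε) = {∇c(x) y : y ∈ Y^ε(x)}`. -/
def Gcomp {n m : ℕ} (c : EuclideanSpace ℝ (Fin n) → EuclideanSpace ℝ (Fin m))
    (c' : EuclideanSpace ℝ (Fin n) → (EuclideanSpace ℝ (Fin n) →L[ℝ] EuclideanSpace ℝ (Fin m)))
    (h : EuclideanSpace ℝ (Fin m) → ℝ) (x : EuclideanSpace ℝ (Fin n)) (ε : ℝ) :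
    Set (EuclideanSpace ℝ (Fin n)) :=
  (fun y => nablaC c' x y) '' regDual c c' h ε x

/-- The prox-linear objective `z ↦ h(c(x) + ∇c(x)ᵀ(z − x)) + ‖z − x‖²/(2ε)`. -/
def proxObj {n m : ℕ} (c : EuclideanSpace ℝ (Fin n) → EuclideanSpace ℝ (Fin m))
    (c' : EuclideanSpace ℝ (Fin n) → (EuclideanSpace ℝ (Fin n) →L[ℝ] EuclideanSpace ℝ (Fin m)))
    (h : EuclideanSpace ℝ (Fin m) → ℝ) (ε : ℝ) (x z : EuclideanSpace ℝ (Fin n)) : ℝ :=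
  h (c x + (c' x) (z - x)) + ‖z - x‖ ^ 2 / (2 * ε)


section AuxLemmas

private lemma aux_nonpos {a C t₀ : ℝ} (hC : 0 ≤ C) (ht₀ : 0 < t₀)
    (H : ∀ t : ℝ, 0 < t → t ≤ t₀ → a ≤ C * t) : a ≤ 0 := by
  refine le_of_forall_pos_le_add fun δ hδ => ?_
  have hC1 : (0:ℝ) < C + 1 := by linarith
  have hs0 : 0 < min t₀ (δ / (C + 1)) := lt_min ht₀ (div_pos hδ hC1)
  have h1 := H _ hs0 (min_le_left _ _)
  have h2 : C * min t₀ (δ / (C + 1)) ≤ C * (δ / (C + 1)) :=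
    mul_le_mul_of_nonneg_left (min_le_right _ _) hC
  have h4 : C / (C + 1) ≤ 1 := by rw [div_le_one hC1]; linarith
  have h3 : C * (δ / (C + 1)) ≤ δ := by
    calc C * (δ / (C + 1)) = C / (C + 1) * δ := by ring
    _ ≤ 1 * δ := mul_le_mul_of_nonneg_right h4 hδ.le
    _ = δ := one_mul δ
  linarith

/-- Key Hahn–Banach lemma: existence of a subgradient of `h` at `u` whose pairing with a
given direction `v₀` dominates any asymptotic lower bound `B` for the difference quotients. -/
private lemma exists_subgradient_ge {m : ℕ} {h : EuclideanSpace ℝ (Fin m) → ℝ} {L : ℝ≥0}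
    (hconv : ConvexOn ℝ Set.univ h) (hL : LipschitzWith L h)
    (u v₀ : EuclideanSpace ℝ (Fin m)) (B C : ℝ) (hC : 0 ≤ C)
    (hB : ∀ t : ℝ, 0 < t → B - C * t ≤ (h (u + t • v₀) - h u) / t) :
    ∃ w ∈ convexSubdiff h u, B ≤ ⟪w, v₀⟫ := by
  classical
  let Q : EuclideanSpace ℝ (Fin m) → ℝ → ℝ := fun v t => (h (u + t • v) - h u) / t
  have hLip : ∀ a b : EuclideanSpace ℝ (Fin m), h a - h b ≤ (L:ℝ) * ‖a - b‖ := by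
    intro a b
    calc h a - h b ≤ |h a - h b| := le_abs_self _
    _ = dist (h a) (h b) := (Real.dist_eq _ _).symm
    _ ≤ (L:ℝ) * dist a b := hL.dist_le_mul a b
    _ = (L:ℝ) * ‖a - b‖ := by rw [dist_eq_norm]
  have hmono : ∀ v : EuclideanSpace ℝ (Fin m), ∀ s t : ℝ, 0 < s → s ≤ t → Q v s ≤ Q v t := by
    intro v s t hs hst
    have ht : 0 < t := lt_of_lt_of_le hs hst
    have ha : (0:ℝ) ≤ 1 - s / t := by
      have : s / t ≤ 1 := by rw [div_le_one ht]; exact hst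
      linarith
    have hb : (0:ℝ) ≤ s / t := by positivity
    have hcomb := hconv.2 (Set.mem_univ u) (Set.mem_univ (u + t • v)) ha hb (by ring)
    have hpt : (1 - s / t) • u + (s / t) • (u + t • v) = u + s • v := by
      rw [smul_add, smul_smul, div_mul_cancel₀ s ht.ne', ← add_assoc, ← add_smul,
        sub_add_cancel, one_smul]
    rw [hpt] at hcomb
    have h2 : h (u + s • v) - h u ≤ s / t * (h (u + t • v) - h u) := by
      have e : (1 - s / t) * h u + s / t * h (u + t • v)
          = h u + s / t * (h (u + t • v) - h u) := by ring
      linarith [e ▸ hcomb]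
    show (h (u + s • v) - h u) / s ≤ (h (u + t • v) - h u) / t
    rw [div_le_div_iff₀ hs ht]
    calc (h (u + s • v) - h u) * t ≤ s / t * (h (u + t • v) - h u) * t :=
          mul_le_mul_of_nonneg_right h2 ht.le
    _ = (h (u + t • v) - h u) * s := by field_simp
  have hbddQ : ∀ v : EuclideanSpace ℝ (Fin m), BddBelow (Q v '' Set.Ioi 0) := by
    intro v
    refine ⟨-((L:ℝ) * ‖v‖), ?_⟩
    rintro q ⟨t, ht, rfl⟩
    have ht : (0:ℝ) < t := ht
    have h1 := hLip u (u + t • v)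
    have hn : ‖u - (u + t • v)‖ = t * ‖v‖ := by
      rw [sub_add_eq_sub_sub, sub_self, zero_sub, norm_neg, norm_smul,
        Real.norm_eq_abs, abs_of_pos ht]
    rw [hn] at h1
    show -((L:ℝ) * ‖v‖) ≤ (h (u + t • v) - h u) / t
    rw [le_div_iff₀ ht]
    nlinarith
  have hne : ∀ v : EuclideanSpace ℝ (Fin m), (Q v '' Set.Ioi 0).Nonempty := fun v =>
    ⟨Q v 1, ⟨1, Set.mem_Ioi.mpr one_pos, rfl⟩⟩
  let p : EuclideanSpace ℝ (Fin m) → ℝ := fun v => sInf (Q v '' Set.Ioi 0)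
  have hple : ∀ v, ∀ t : ℝ, 0 < t → p v ≤ Q v t := fun v t ht =>
    csInf_le (hbddQ v) ⟨t, ht, rfl⟩
  have hlep : ∀ (v : EuclideanSpace ℝ (Fin m)) (B' C' : ℝ), 0 ≤ C' →
      (∀ t : ℝ, 0 < t → B' - C' * t ≤ Q v t) → B' ≤ p v := by
    intro v B' C' hC' H
    refine le_csInf (hne v) ?_
    rintro q ⟨t, ht, rfl⟩
    have ht : (0:ℝ) < t := ht
    have hkey : B' - Q v t ≤ 0 := by
      refine aux_nonpos hC' ht fun s hs hst => ?_
      have := H s hs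
      have := hmono v s t hs hst
      linarith
    linarith
  have hQ0 : ∀ t : ℝ, 0 < t → Q 0 t = 0 := by
    intro t ht; show (h (u + t • (0:EuclideanSpace ℝ (Fin m))) - h u) / t = 0
    rw [smul_zero, add_zero, sub_self, zero_div]
  have hp0 : p 0 = 0 := by
    have h1 : p 0 ≤ Q 0 1 := hple 0 1 one_pos
    have h3 : (0:ℝ) ≤ p 0 := hlep 0 0 0 le_rfl fun t ht => by rw [hQ0 t ht]; linarith
    have := hQ0 1 one_pos
    linarith
  have hpadd : ∀ v w : EuclideanSpace ℝ (Fin m), p (v + w) ≤ p v + p w := by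
    intro v w
    have step : ∀ t : ℝ, 0 < t → Q (v + w) t ≤ Q v (2 * t) + Q w (2 * t) := by
      intro t ht
      have hcomb := hconv.2 (Set.mem_univ (u + (2 * t) • v)) (Set.mem_univ (u + (2 * t) • w))
        (by norm_num : (0:ℝ) ≤ 1/2) (by norm_num : (0:ℝ) ≤ 1/2) (by norm_num)
      have hpt : (1/2 : ℝ) • (u + (2 * t) • v) + (1/2 : ℝ) • (u + (2 * t) • w)
          = u + t • (v + w) := by
        rw [smul_add, smul_add, smul_smul, smul_smul, smul_add]
        have e1 : (1/2 : ℝ) * (2 * t) = t := by ring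
        rw [e1, ← add_assoc, add_right_comm ((1/2:ℝ) • u), ← add_smul]
        norm_num
        abel
      rw [hpt] at hcomb
      simp only [smul_eq_mul] at hcomb
      show (h (u + t • (v + w)) - h u) / t ≤ _
      rw [← add_div, div_le_div_iff₀ ht (by positivity)]
      have hc2 := mul_le_mul_of_nonneg_right hcomb ht.le
      nlinarith [hc2]
    have step2 : ∀ t1 t2 : ℝ, 0 < t1 → 0 < t2 → p (v + w) ≤ Q v t1 + Q w t2 := by
      intro t1 t2 h1 h2
      have ht : 0 < min t1 t2 := lt_min h1 h2
      have hs := step (min t1 t2 / 2) (half_pos ht)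
      have e : 2 * (min t1 t2 / 2) = min t1 t2 := by ring
      rw [e] at hs
      have hp := hple (v + w) (min t1 t2 / 2) (half_pos ht)
      have m1 := hmono v (min t1 t2) t1 ht (min_le_left _ _)
      have m2 := hmono w (min t1 t2) t2 ht (min_le_right _ _)
      linarith
    have s3 : ∀ t2 : ℝ, 0 < t2 → p (v + w) - Q w t2 ≤ p v := by
      intro t2 h2
      refine le_csInf (hne v) ?_
      rintro q ⟨t1, h1, rfl⟩
      linarith [step2 t1 t2 h1 h2]
    have s4 : p (v + w) - p v ≤ p w := by
      refine le_csInf (hne w) ?_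
      rintro q ⟨t2, h2, rfl⟩
      linarith [s3 t2 h2]
    linarith
  have hpsmul : ∀ a : ℝ, 0 < a → ∀ v : EuclideanSpace ℝ (Fin m), p (a • v) = a * p v := by
    intro a ha v
    have hQs : ∀ t : ℝ, 0 < t → Q (a • v) t = a * Q v (a * t) := by
      intro t ht
      have e : t • (a • v) = (a * t) • v := by rw [smul_smul, mul_comm]
      show (h (u + t • (a • v)) - h u) / t = a * ((h (u + (a * t) • v) - h u) / (a * t))
      rw [e]
      field_simp
    apply le_antisymm
    · have h1 : ∀ s : ℝ, 0 < s → p (a • v) ≤ a * Q v s := by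
        intro s hs
        have hsa : 0 < s / a := div_pos hs ha
        have h2 := hple (a • v) (s / a) hsa
        rw [hQs (s / a) hsa] at h2
        rwa [mul_div_cancel₀ s ha.ne'] at h2
      have h2 : p (a • v) / a ≤ p v := by
        refine le_csInf (hne v) ?_
        rintro q ⟨s, hs, rfl⟩
        rw [div_le_iff₀ ha]
        have := h1 s hs
        linarith [this]
      calc p (a • v) = p (a • v) / a * a := by field_simp
      _ ≤ p v * a := mul_le_mul_of_nonneg_right h2 ha.le
      _ = a * p v := mul_comm _ _
    · refine le_csInf (hne (a • v)) ?_
      rintro q ⟨t, ht, rfl⟩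
      rw [hQs t ht]
      exact mul_le_mul_of_nonneg_left (hple v (a * t) (mul_pos ha ht)) ha.le
  have hBp : B ≤ p v₀ := hlep v₀ B C hC hB
  let ℓ : EuclideanSpace ℝ (Fin m) →ₗ[ℝ] ℝ :=
    (p v₀ / ‖v₀‖ ^ 2) • ((innerSL ℝ v₀ : EuclideanSpace ℝ (Fin m) →L[ℝ] ℝ) :
      EuclideanSpace ℝ (Fin m) →ₗ[ℝ] ℝ)
  have hℓ : ∀ x : EuclideanSpace ℝ (Fin m), ℓ x = p v₀ / ‖v₀‖ ^ 2 * ⟪v₀, x⟫ := by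
    intro x; simp [ℓ]
  have hℓsmul : ∀ a : ℝ, ℓ (a • v₀) ≤ p (a • v₀) := by
    intro a
    by_cases hv : v₀ = 0
    · rw [hv, smul_zero, hp0]
      rw [hℓ]; simp
    · have hnv : (0:ℝ) < ‖v₀‖ ^ 2 := by
        have : 0 < ‖v₀‖ := norm_pos_iff.mpr hv
        positivity
      have e1 : ℓ (a • v₀) = a * p v₀ := by
        rw [hℓ, real_inner_smul_right, real_inner_self_eq_norm_sq]
        field_simp
      rcases lt_trichotomy a 0 with hlt | heq | hgt
      · have e2 : a • v₀ + (-a) • v₀ = (0:EuclideanSpace ℝ (Fin m)) := by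
          rw [← add_smul]; simp
        have key := hpadd (a • v₀) ((-a) • v₀)
        rw [e2, hp0] at key
        have e3 := hpsmul (-a) (by linarith) v₀
        rw [e1]; linarith
      · rw [heq] at e1 ⊢
        rw [e1, zero_smul, hp0]
        simp
      · rw [e1, hpsmul a hgt v₀]
  have hdom : ∀ x : (ℓ.toPMap (Submodule.span ℝ {v₀})).domain,
      ℓ.toPMap (Submodule.span ℝ {v₀}) x ≤ p x := by
    rintro ⟨x, hx⟩
    obtain ⟨a, rfl⟩ := Submodule.mem_span_singleton.mp hx
    show ℓ (a • v₀) ≤ p (a • v₀)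
    exact hℓsmul a
  obtain ⟨gl, hgl_eq, hgl_le⟩ :=
    exists_extension_of_le_sublinear (ℓ.toPMap (Submodule.span ℝ {v₀})) p
      (fun c hc x => hpsmul c hc x) hpadd hdom
  let w : EuclideanSpace ℝ (Fin m) :=
    (InnerProductSpace.toDual ℝ (EuclideanSpace ℝ (Fin m))).symm
      (LinearMap.toContinuousLinearMap gl)
  have hw : ∀ x : EuclideanSpace ℝ (Fin m), ⟪w, x⟫ = gl x := by
    intro x
    exact InnerProductSpace.toDual_symm_apply
  have hwsub : w ∈ convexSubdiff h u := by
    intro z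
    have h1 : gl (z - u) ≤ p (z - u) := hgl_le _
    have h2 : p (z - u) ≤ Q (z - u) 1 := hple _ 1 one_pos
    have h3 : Q (z - u) 1 = h z - h u := by
      show (h (u + (1:ℝ) • (z - u)) - h u) / 1 = h z - h u
      rw [one_smul, add_sub_cancel, div_one]
    rw [hw]
    linarith
  refine ⟨w, hwsub, ?_⟩
  have hv₀mem : v₀ ∈ Submodule.span ℝ ({v₀} : Set (EuclideanSpace ℝ (Fin m))) :=
    Submodule.mem_span_singleton_self v₀
  have h4 : gl v₀ = ℓ v₀ := by
    have := hgl_eq ⟨v₀, hv₀mem⟩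
    change gl v₀ = ℓ v₀ at this
    exact this
  by_cases hv : v₀ = 0
  · rw [hv] at hBp ⊢
    rw [inner_zero_right]
    rw [hp0] at hBp
    exact hBp
  · have hnv : (0:ℝ) < ‖v₀‖ ^ 2 := by
      have : 0 < ‖v₀‖ := norm_pos_iff.mpr hv
      positivity
    have h5 : ℓ v₀ = p v₀ := by
      rw [hℓ, real_inner_self_eq_norm_sq]
      field_simp
    rw [hw, h4, h5]
    exact hBp


private lemma norm_le_of_mem_convexSubdiff {m : ℕ} {h : EuclideanSpace ℝ (Fin m) → ℝ}
    {L : ℝ≥0} (hL : LipschitzWith L h) {u w : EuclideanSpace ℝ (Fin m)}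
    (hw : w ∈ convexSubdiff h u) : ‖w‖ ≤ (L:ℝ) := by
  have h1 := hw (u + w)
  have h2 : h (u + w) - h u ≤ (L:ℝ) * ‖w‖ := by
    calc h (u + w) - h u ≤ |h (u + w) - h u| := le_abs_self _
    _ = dist (h (u + w)) (h u) := (Real.dist_eq _ _).symm
    _ ≤ (L:ℝ) * dist (u + w) u := hL.dist_le_mul _ _
    _ = (L:ℝ) * ‖w‖ := by rw [dist_eq_norm, add_sub_cancel_left]
  have h3 : ⟪w, u + w - u⟫ = ‖w‖ ^ 2 := by
    rw [add_sub_cancel_left, real_inner_self_eq_norm_sq]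
  rw [h3] at h1
  rcases eq_or_lt_of_le (norm_nonneg w) with h0 | h0
  · rw [← h0]; positivity
  · nlinarith

private lemma exists_near_compSubdiff {n m : ℕ}
    (c : EuclideanSpace ℝ (Fin n) → EuclideanSpace ℝ (Fin m))
    (c' : EuclideanSpace ℝ (Fin n) → (EuclideanSpace ℝ (Fin n) →L[ℝ] EuclideanSpace ℝ (Fin m)))
    {h : EuclideanSpace ℝ (Fin m) → ℝ} {L : ℝ≥0}
    (hconv : ConvexOn ℝ Set.univ h) (hL : LipschitzWith L h)
    (z ζ : EuclideanSpace ℝ (Fin n)) (σ C : ℝ) (hσ : 0 ≤ σ) (hC : 0 ≤ C)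
    (H : ∀ d : EuclideanSpace ℝ (Fin n), ∀ t : ℝ, 0 < t →
      ⟪ζ, d⟫ - σ * ‖d‖ - C * ‖d‖ ^ 2 * t ≤ (h (c z + t • ((c' z) d)) - h (c z)) / t) :
    ∃ π ∈ compSubdiff c c' h z, ‖ζ - π‖ ≤ σ := by
  classical
  set K := convexSubdiff h (c z) with hKdef
  set A := nablaC c' z with hAdef
  have hKconv : Convex ℝ K := by
    intro w1 h1 w2 h2 a b ha hb hab
    intro zz
    have q1 : ⟪w1, zz - c z⟫ ≤ h zz - h (c z) := by linarith [h1 zz]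
    have q2 : ⟪w2, zz - c z⟫ ≤ h zz - h (c z) := by linarith [h2 zz]
    have e : ⟪a • w1 + b • w2, zz - c z⟫ = a * ⟪w1, zz - c z⟫ + b * ⟪w2, zz - c z⟫ := by
      rw [inner_add_left, real_inner_smul_left, real_inner_smul_left]
    have q3 : a * ⟪w1, zz - c z⟫ ≤ a * (h zz - h (c z)) := mul_le_mul_of_nonneg_left q1 ha
    have q4 : b * ⟪w2, zz - c z⟫ ≤ b * (h zz - h (c z)) := mul_le_mul_of_nonneg_left q2 hb
    have q5 : a * (h zz - h (c z)) + b * (h zz - h (c z)) = h zz - h (c z) := by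
      rw [← add_mul, hab, one_mul]
    show h (c z) + ⟪a • w1 + b • w2, zz - c z⟫ ≤ h zz
    rw [e]; linarith
  have hKclosed : IsClosed K := by
    have e : K = ⋂ zz, {w : EuclideanSpace ℝ (Fin m) | h (c z) + ⟪w, zz - c z⟫ ≤ h zz} := by
      ext w; simp only [Set.mem_iInter, Set.mem_setOf_eq]; rfl
    rw [e]
    exact isClosed_iInter fun zz =>
      isClosed_le (continuous_const.add (continuous_id.inner continuous_const)) continuous_const
  have hKcompact : IsCompact K := by
    apply Metric.isCompact_of_isClosed_isBounded hKclosed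
    exact isBounded_iff_forall_norm_le.mpr
      ⟨(L:ℝ), fun w hw => norm_le_of_mem_convexSubdiff hL hw⟩
  have hKne : K.Nonempty := by
    obtain ⟨w, hw, -⟩ := exists_subgradient_ge hconv hL (c z) 0 0 0 le_rfl
      (fun t ht => by simp)
    exact ⟨w, hw⟩
  have hK'img : compSubdiff c c' h z = (fun w => A w) '' K := rfl
  have hK'ne : (compSubdiff c c' h z).Nonempty := by rw [hK'img]; exact hKne.image _
  have hK'compact : IsCompact (compSubdiff c c' h z) := by
    rw [hK'img]; exact hKcompact.image A.continuous
  have hK'conv : Convex ℝ (compSubdiff c c' h z) := by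
    rw [hK'img]
    exact hKconv.is_linear_image ⟨fun a b => A.map_add a b, fun r a => A.map_smul r a⟩
  have hK'complete : IsComplete (compSubdiff c c' h z) := hK'compact.isComplete
  obtain ⟨π, hπK, hπeq⟩ := exists_norm_eq_iInf_of_complete_convex hK'ne hK'complete hK'conv ζ
  have hchar := (norm_eq_iInf_iff_real_inner_le_zero hK'conv hπK).mp hπeq
  obtain ⟨w, hwK, hwd⟩ := exists_subgradient_ge hconv hL (c z) ((c' z) (ζ - π))
    (⟪ζ, ζ - π⟫ - σ * ‖ζ - π‖) (C * ‖ζ - π‖ ^ 2) (by positivity) (fun t ht => H (ζ - π) t ht)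
  have hAw : A w ∈ compSubdiff c c' h z := ⟨w, hwK, rfl⟩
  have h1 : ⟪A w, ζ - π⟫ = ⟪w, (c' z) (ζ - π)⟫ :=
    ContinuousLinearMap.adjoint_inner_left (c' z) (ζ - π) w
  have h2 : ⟪ζ - π, A w - π⟫ ≤ 0 := hchar _ hAw
  have h3 : ‖ζ - π‖ ^ 2 ≤ σ * ‖ζ - π‖ := by
    have e1 : ⟪ζ - π, A w - π⟫ = ⟪A w, ζ - π⟫ - ⟪π, ζ - π⟫ := by
      rw [inner_sub_right, real_inner_comm (ζ - π) (A w), real_inner_comm (ζ - π) π]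
    have e2 : ⟪ζ - π, ζ - π⟫ = ⟪ζ, ζ - π⟫ - ⟪π, ζ - π⟫ := inner_sub_left _ _ _
    have e3 : ⟪ζ - π, ζ - π⟫ = ‖ζ - π‖ ^ 2 := real_inner_self_eq_norm_sq _
    rw [h1] at e1
    linarith [hwd]
  rcases eq_or_lt_of_le (norm_nonneg (ζ - π)) with h0 | h0
  · exact ⟨π, hπK, by rw [← h0]; exact hσ⟩
  · exact ⟨π, hπK, by nlinarith⟩


private lemma taylor_bound {n m : ℕ}
    (c : EuclideanSpace ℝ (Fin n) → EuclideanSpace ℝ (Fin m))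
    (c' : EuclideanSpace ℝ (Fin n) → (EuclideanSpace ℝ (Fin n) →L[ℝ] EuclideanSpace ℝ (Fin m)))
    {β : ℝ≥0} (hc : ∀ x, HasFDerivAt c (c' x) x) (hβ : LipschitzWith β c')
    (a b : EuclideanSpace ℝ (Fin n)) :
    ‖c b - c a - (c' a) (b - a)‖ ≤ (β:ℝ) / 2 * ‖b - a‖ ^ 2 := by
  set C₀ : ℝ := (β:ℝ) * ‖b - a‖ ^ 2 with hC₀
  set φ : ℝ → EuclideanSpace ℝ (Fin m) :=
    fun t => c (a + t • (b - a)) - c a - t • ((c' a) (b - a)) with hφdef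
  set φ' : ℝ → EuclideanSpace ℝ (Fin m) :=
    fun t => (c' (a + t • (b - a))) (b - a) - (c' a) (b - a) with hφ'def
  have hφ' : ∀ t : ℝ, HasDerivAt φ (φ' t) t := by
    intro t
    have hγ : HasDerivAt (fun t : ℝ => a + t • (b - a)) (b - a) t := by
      have h1 : HasDerivAt (fun t : ℝ => t • (b - a)) ((1:ℝ) • (b - a)) t :=
        (hasDerivAt_id t).smul_const (b - a)
      simpa using h1.const_add a
    have h2 := (hc (a + t • (b - a))).comp_hasDerivAt t hγ
    have h3 : HasDerivAt (fun s : ℝ => s • ((c' a) (b - a))) ((1:ℝ) • ((c' a) (b - a))) t :=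
      (hasDerivAt_id t).smul_const ((c' a) (b - a))
    have h4 := (h2.sub_const (c a)).sub h3
    exact h4.congr_deriv (by simp [hφ'def])
  have hbound : ∀ t ∈ Set.Ico (0:ℝ) 1, ‖φ' t‖ ≤ C₀ * t := by
    intro t ht
    have e : φ' t = ((c' (a + t • (b - a))) - (c' a)) (b - a) := by
      rw [hφ'def]; simp [ContinuousLinearMap.sub_apply]
    have h1 : ‖φ' t‖ ≤ ‖(c' (a + t • (b - a))) - (c' a)‖ * ‖b - a‖ := by
      rw [e]; exact ContinuousLinearMap.le_opNorm _ _
    have h2 : ‖(c' (a + t • (b - a))) - (c' a)‖ ≤ (β:ℝ) * (t * ‖b - a‖) := by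
      have h3 := hβ.dist_le_mul (a + t • (b - a)) a
      rw [dist_eq_norm, dist_eq_norm] at h3
      have e2 : a + t • (b - a) - a = t • (b - a) := add_sub_cancel_left a _
      rw [e2, norm_smul, Real.norm_eq_abs, abs_of_nonneg ht.1] at h3
      exact h3
    calc ‖φ' t‖ ≤ ‖(c' (a + t • (b - a))) - (c' a)‖ * ‖b - a‖ := h1
    _ ≤ (β:ℝ) * (t * ‖b - a‖) * ‖b - a‖ :=
        mul_le_mul_of_nonneg_right h2 (norm_nonneg _)
    _ = C₀ * t := by rw [hC₀]; ring
  have hB : ∀ t : ℝ, HasDerivAt (fun s : ℝ => C₀ / 2 * s ^ 2) (C₀ * t) t := by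
    intro t
    have h1 := (hasDerivAt_pow 2 t).const_mul (C₀ / 2)
    exact h1.congr_deriv (by rw [show (2:ℕ) - 1 = 1 from rfl, pow_one, Nat.cast_ofNat]; ring)
  have key := image_norm_le_of_norm_deriv_right_le_deriv_boundary
    (fun t _ => (hφ' t).continuousAt.continuousWithinAt)
    (fun t _ => (hφ' t).hasDerivWithinAt)
    (by simp [hφdef] : ‖φ 0‖ ≤ C₀ / 2 * (0:ℝ) ^ 2)
    hB hbound
  have h5 := key (Set.right_mem_Icc.mpr zero_le_one)
  have e5 : φ 1 = c b - c a - (c' a) (b - a) := by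
    rw [hφdef]
    simp only [one_smul]
    rw [add_sub_cancel]
  rw [e5] at h5
  calc ‖c b - c a - (c' a) (b - a)‖ ≤ C₀ / 2 * (1:ℝ) ^ 2 := h5
  _ = (β:ℝ) / 2 * ‖b - a‖ ^ 2 := by rw [hC₀]; ring

end AuxLemmas

set_option maxHeartbeats 2000000 in
/-- error bound from metric subregularity: if `x̄` is a stationary
point of `f = h ∘ c` and `∂f` is metrically subregular at `(x̄, 0)` with modulus `κ`,
then for every `ε̄ > 0` there is `τ > 0` such that
`dist(x, (∂f)⁻¹(0)) ≤ ((3Lβε + 2)κ + 2ε) ‖G(x, ε)‖` for all `x ∈ 𝔹_τ(x̄)` and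
`ε ∈ (0, ε̄)`. -/
theorem composite_errorBound_of_metricSubregular {n m : ℕ}
    (c : EuclideanSpace ℝ (Fin n) → EuclideanSpace ℝ (Fin m))
    (c' : EuclideanSpace ℝ (Fin n) → (EuclideanSpace ℝ (Fin n) →L[ℝ] EuclideanSpace ℝ (Fin m)))
    (β : ℝ≥0) (hc : ∀ x, HasFDerivAt c (c' x) x) (hβ : LipschitzWith β c')
    (h : EuclideanSpace ℝ (Fin m) → ℝ) (L : ℝ≥0)
    (hconv : ConvexOn ℝ Set.univ h) (hL : LipschitzWith L h)
    (hbdd : BddBelow (Set.range h))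
    (xbar : EuclideanSpace ℝ (Fin n))
    (hstat : (0 : EuclideanSpace ℝ (Fin n)) ∈ compSubdiff c c' h xbar)
    (κ : ℝ) (hκ : 0 < κ)
    (hsubreg : ∃ τ₀ > (0 : ℝ), ∀ x : EuclideanSpace ℝ (Fin n), ‖x - xbar‖ < τ₀ →
      Metric.infDist x {z | (0 : EuclideanSpace ℝ (Fin n)) ∈ compSubdiff c c' h z} ≤
        κ * Metric.infDist 0 (compSubdiff c c' h x)) :
    ∀ εbar > (0 : ℝ), ∃ τ > (0 : ℝ), ∀ x : EuclideanSpace ℝ (Fin n), ‖x - xbar‖ < τ →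
      ∀ ε ∈ Set.Ioo (0 : ℝ) εbar, ∀ g ∈ Gcomp c c' h x ε,
        Metric.infDist x {z | (0 : EuclideanSpace ℝ (Fin n)) ∈ compSubdiff c c' h z} ≤
          ((3 * (L : ℝ) * (β : ℝ) * ε + 2) * κ + 2 * ε) * ‖g‖ := by
  intro εbar hεbar
  obtain ⟨τ₀, hτ₀, hsub⟩ := hsubreg
  refine ⟨τ₀ / 2, by linarith, ?_⟩
  intro x hx ε hεmem g hg
  obtain ⟨hε0, hεbar'⟩ := hεmem
  obtain ⟨y, hyY, hgy⟩ := hg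
  obtain ⟨hydom, hymax⟩ := hyY
  have hxbarS : xbar ∈ {z | (0 : EuclideanSpace ℝ (Fin n)) ∈ compSubdiff c c' h z} := hstat
  set Lb : ℝ := (L:ℝ) * (β:ℝ) with hLbdef
  have hLb0 : 0 ≤ Lb := by positivity
  have hgy' : nablaC c' x y = g := hgy
  have hgy'' : ContinuousLinearMap.adjoint (c' x) y = g := hgy'
  -- global Lipschitz estimate for h
  have hLiph : ∀ a b : EuclideanSpace ℝ (Fin m), h a - h b ≤ (L:ℝ) * ‖a - b‖ := by
    intro a b
    calc h a - h b ≤ |h a - h b| := le_abs_self _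
    _ = dist (h a) (h b) := (Real.dist_eq _ _).symm
    _ ≤ (L:ℝ) * dist a b := hL.dist_le_mul a b
    _ = (L:ℝ) * ‖a - b‖ := by rw [dist_eq_norm]
  have hFY : ∀ w : EuclideanSpace ℝ (Fin m), inDomStar h w →
      ∀ zz, ⟪w, zz⟫ - h zz ≤ fenchelConj h w := fun w hw zz => le_ciSup hw zz
  set u : EuclideanSpace ℝ (Fin m) := c x - ε • ((c' x) g) with hudef
  set xp : EuclideanSpace ℝ (Fin n) := x - ε • g with hxpdef
  -- a subgradient of h at u
  obtain ⟨what, hwhat, -⟩ := exists_subgradient_ge hconv hL u 0 0 0 le_rfl (fun t ht => by simp)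
  have hwhatub : ∀ zz, ⟪what, zz⟫ - h zz ≤ ⟪what, u⟫ - h u := by
    intro zz
    have h1 := hwhat zz
    have e : ⟪what, zz - u⟫ = ⟪what, zz⟫ - ⟪what, u⟫ := inner_sub_right _ _ _
    rw [e] at h1
    linarith
  have hwhatdom : inDomStar h what := ⟨⟪what, u⟫ - h u, by rintro q ⟨zz, rfl⟩; exact hwhatub zz⟩
  have hwhatconj : fenchelConj h what ≤ ⟪what, u⟫ - h u := ciSup_le hwhatub
  -- key optimality identity :  h(u) + h*(y) ≤ ⟨y, u⟩
  have hKey : h u + fenchelConj h y ≤ ⟪y, u⟫ := by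
    have hEkey : ⟪what - y, u⟫ - fenchelConj h what + fenchelConj h y ≤ 0 := by
      have hNnn : (0:ℝ) ≤ ε / 2 * ‖nablaC c' x (what - y)‖ ^ 2 := by positivity
      refine aux_nonpos hNnn one_pos ?_
      intro t ht ht1
      have hcomb : ∀ zz, ⟪y + t • (what - y), zz⟫ - h zz
          ≤ (1 - t) * fenchelConj h y + t * fenchelConj h what := by
        intro zz
        have e1 : ⟪y + t • (what - y), zz⟫ - h zz
            = (1 - t) * (⟪y, zz⟫ - h zz) + t * (⟪what, zz⟫ - h zz) := by
          rw [inner_add_left, real_inner_smul_left, inner_sub_left]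
          ring
        rw [e1]
        have b1 := hFY y hydom zz
        have b2 := hFY what hwhatdom zz
        have m1 : (1 - t) * (⟪y, zz⟫ - h zz) ≤ (1 - t) * fenchelConj h y :=
          mul_le_mul_of_nonneg_left b1 (by linarith)
        have m2 : t * (⟪what, zz⟫ - h zz) ≤ t * fenchelConj h what :=
          mul_le_mul_of_nonneg_left b2 ht.le
        linarith
      have hytdom : inDomStar h (y + t • (what - y)) :=
        ⟨(1 - t) * fenchelConj h y + t * fenchelConj h what, by rintro q ⟨zz, rfl⟩; exact hcomb zz⟩
      have hytconj : fenchelConj h (y + t • (what - y))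
          ≤ (1 - t) * fenchelConj h y + t * fenchelConj h what := ciSup_le hcomb
      have hmax := hymax (y + t • (what - y)) hytdom
      have e1 : ⟪y + t • (what - y), c x⟫ = ⟪y, c x⟫ + t * ⟪what - y, c x⟫ := by
        rw [inner_add_left, real_inner_smul_left]
      have e2 : nablaC c' x (y + t • (what - y))
          = nablaC c' x y + t • nablaC c' x (what - y) := by
        rw [map_add, map_smul]
      have e3 : ‖nablaC c' x (y + t • (what - y))‖ ^ 2
          = ‖nablaC c' x y‖ ^ 2 + 2 * t * ⟪nablaC c' x y, nablaC c' x (what - y)⟫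
            + t ^ 2 * ‖nablaC c' x (what - y)‖ ^ 2 := by
        rw [e2, norm_add_sq_real, real_inner_smul_right, norm_smul, Real.norm_eq_abs,
          abs_of_pos ht]
        ring
      have e4 : ⟪nablaC c' x y, nablaC c' x (what - y)⟫ = ⟪what - y, (c' x) g⟫ := by
        rw [real_inner_comm]
        show ⟪ContinuousLinearMap.adjoint (c' x) (what - y), ContinuousLinearMap.adjoint (c' x) y⟫
          = ⟪what - y, (c' x) g⟫
        rw [ContinuousLinearMap.adjoint_inner_left, hgy'']
      have e5 : ⟪what - y, u⟫ = ⟪what - y, c x⟫ - ε * ⟪what - y, (c' x) g⟫ := by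
        rw [hudef, inner_sub_right, real_inner_smul_right]
      rw [e1, e3, e4] at hmax
      -- hmax : ⟪y,cx⟫ + t*⟪what-y,cx⟫ - conj(yt) - ε/2*(...) ≤ ⟪y,cx⟫ - conj y - ε/2*‖Ay‖²
      have step : t * (⟪what - y, u⟫ - fenchelConj h what + fenchelConj h y)
          ≤ t * (ε / 2 * ‖nablaC c' x (what - y)‖ ^ 2 * t) := by
        rw [e5]
        nlinarith [hmax, hytconj]
      exact le_of_mul_le_mul_left step ht
    have h1 : ⟪what - y, u⟫ = ⟪what, u⟫ - ⟪y, u⟫ := inner_sub_left _ _ _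
    rw [h1] at hEkey
    linarith
  -- subgradient inequality of the linear model at xp
  have hClaim0 : ∀ zz : EuclideanSpace ℝ (Fin n),
      h u + ⟪g, zz - xp⟫ ≤ h (c x + (c' x) (zz - x)) := by
    intro zz
    have b1 := hFY y hydom (c x + (c' x) (zz - x))
    have e1 : ⟪y, c x + (c' x) (zz - x)⟫ = ⟪y, c x⟫ + ⟪g, zz - x⟫ := by
      rw [inner_add_right]
      congr 1
      rw [← hgy'']
      exact (ContinuousLinearMap.adjoint_inner_left _ _ _).symm
    have e2 : ⟪y, u⟫ = ⟪y, c x⟫ - ε * ‖g‖ ^ 2 := by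
      have e2a : ⟪y, (c' x) g⟫ = ‖g‖ ^ 2 := by
        rw [← ContinuousLinearMap.adjoint_inner_left, hgy'', real_inner_self_eq_norm_sq]
      rw [hudef, inner_sub_right, real_inner_smul_right, e2a]
    have e3 : ⟪g, zz - xp⟫ = ⟪g, zz - x⟫ + ε * ‖g‖ ^ 2 := by
      have e4 : zz - xp = (zz - x) + ε • g := by rw [hxpdef]; abel
      rw [e4, inner_add_right, real_inner_smul_right, real_inner_self_eq_norm_sq]
    rw [e1] at b1
    rw [e2] at hKey
    rw [e3]
    linarith
  -- Taylor-based comparison between f and the model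
  have hG1 : ∀ zz : EuclideanSpace ℝ (Fin n),
      h (c x + (c' x) (zz - x)) - Lb / 2 * ‖zz - x‖ ^ 2 ≤ h (c zz) := by
    intro zz
    have t1 := taylor_bound c c' hc hβ x zz
    have l1 := hLiph (c x + (c' x) (zz - x)) (c zz)
    have e1 : c x + (c' x) (zz - x) - c zz = -(c zz - c x - (c' x) (zz - x)) := by abel
    rw [e1, norm_neg] at l1
    have l2 : (L:ℝ) * ‖c zz - c x - (c' x) (zz - x)‖ ≤ (L:ℝ) * ((β:ℝ) / 2 * ‖zz - x‖ ^ 2) :=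
      mul_le_mul_of_nonneg_left t1 (by positivity)
    rw [hLbdef]
    linarith [l1, l2]
  have hG2 : h (c xp) ≤ h u + Lb / 2 * (ε ^ 2 * ‖g‖ ^ 2) := by
    have t1 := taylor_bound c c' hc hβ x xp
    have exp1 : xp - x = -(ε • g) := by rw [hxpdef]; abel
    have exp2 : (c' x) (xp - x) = -(ε • ((c' x) g)) := by rw [exp1, map_neg, map_smul]
    have hnx : ‖xp - x‖ = ε * ‖g‖ := by
      rw [exp1, norm_neg, norm_smul, Real.norm_eq_abs, abs_of_pos hε0]
    have l1 := hLiph (c xp) u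
    have e1 : c xp - u = c xp - c x - (c' x) (xp - x) := by
      rw [hudef, exp2]; abel
    rw [e1] at l1
    rw [hnx] at t1
    have l2 : (L:ℝ) * ‖c xp - c x - (c' x) (xp - x)‖
        ≤ (L:ℝ) * ((β:ℝ) / 2 * (ε * ‖g‖) ^ 2) := mul_le_mul_of_nonneg_left t1 (by positivity)
    rw [hLbdef]
    nlinarith [l1, l2, sq_nonneg (ε * ‖g‖)]
  -- Claim 1 : approximate minimality of xp
  have hClaim1 : ∀ zz : EuclideanSpace ℝ (Fin n),
      h (c xp) - Lb * ε ^ 2 * ‖g‖ ^ 2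
        ≤ h (c zz) + Lb / 2 * ‖zz - xp‖ ^ 2 - (Lb * ε + 1) * ⟪g, zz - xp⟫ := by
    intro zz
    have P4 : ‖zz - x‖ ^ 2 = ‖zz - xp‖ ^ 2 - 2 * (ε * ⟪g, zz - xp⟫) + ε ^ 2 * ‖g‖ ^ 2 := by
      have e1 : zz - x = (zz - xp) - ε • g := by rw [hxpdef]; abel
      rw [e1, norm_sub_sq_real, real_inner_smul_right, norm_smul, Real.norm_eq_abs,
        abs_of_pos hε0, real_inner_comm]
      ring
    have e1 : Lb / 2 * ‖zz - x‖ ^ 2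
        = Lb / 2 * ‖zz - xp‖ ^ 2 - Lb * ε * ⟪g, zz - xp⟫ + Lb / 2 * (ε ^ 2 * ‖g‖ ^ 2) := by
      rw [P4]; ring
    have := hG1 zz
    have := hClaim0 zz
    linarith [hG1 zz, hClaim0 zz, hG2, e1]
  -- the penalized function η and its global minimizer
  set ν : ℝ := 1 / εbar with hνdef
  have hν0 : 0 < ν := by rw [hνdef]; positivity
  set σ : ℝ := Lb * ε * ‖g‖ with hσdef
  have hσ0 : 0 ≤ σ := by rw [hσdef]; positivity
  set μ : ℝ := Lb / 2 + ν / 2 with hμdef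
  have hμ0 : 0 < μ := by rw [hμdef]; positivity
  set η : EuclideanSpace ℝ (Fin n) → ℝ := fun zz =>
    h (c zz) + μ * ‖zz - xp‖ ^ 2 - (Lb * ε + 1) * ⟪g, zz - xp⟫ + σ * ‖zz - xp‖ with hηdef
  have hηeq : ∀ zz, η zz = h (c zz) + μ * ‖zz - xp‖ ^ 2 - (Lb * ε + 1) * ⟪g, zz - xp⟫
      + σ * ‖zz - xp‖ := fun zz => rfl
  clear_value η
  have hClaim2 : ∀ zz, h (c xp) - Lb * ε ^ 2 * ‖g‖ ^ 2 + ν / 2 * ‖zz - xp‖ ^ 2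
      + σ * ‖zz - xp‖ ≤ η zz := by
    intro zz
    have h1 := hClaim1 zz
    rw [hηeq zz, hμdef]
    linarith
  have hηxp : η xp = h (c xp) := by
    rw [hηeq xp, sub_self, norm_zero, inner_zero_right]
    ring
  have hccont : Continuous c := continuous_iff_continuousAt.mpr fun x0 => (hc x0).continuousAt
  have hηcont : Continuous η := by
    have h1 : Continuous fun zz : EuclideanSpace ℝ (Fin n) => h (c zz) :=
      hL.continuous.comp hccont
    have h2 : Continuous fun zz : EuclideanSpace ℝ (Fin n) => ‖zz - xp‖ :=
      (continuous_id.sub continuous_const).norm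
    have h3 : Continuous fun zz : EuclideanSpace ℝ (Fin n) => ⟪g, zz - xp⟫ :=
      Continuous.inner continuous_const (continuous_id.sub continuous_const)
    rw [hηdef]
    exact ((h1.add ((continuous_const.mul (h2.pow 2)))).sub
      (continuous_const.mul h3)).add (continuous_const.mul h2)
  obtain ⟨mh, hmh⟩ := hbdd
  have hmh' : ∀ w, mh ≤ h w := fun w => hmh (Set.mem_range_self w)
  set R : ℝ := max 1 ((‖g‖ * (Lb * ε + 1) + 1 + (h (c xp) - mh)) * (2 / ν)) with hRdef
  have hR1 : (1:ℝ) ≤ R := le_max_left _ _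
  have hcoer : ∀ zz, R < ‖zz - xp‖ → η xp < η zz := by
    intro zz hzz
    have ht0 : (0:ℝ) ≤ ‖zz - xp‖ := norm_nonneg _
    have hip : ⟪g, zz - xp⟫ ≤ ‖g‖ * ‖zz - xp‖ := real_inner_le_norm _ _
    have h1 : mh + ν / 2 * ‖zz - xp‖ ^ 2 - (Lb * ε + 1) * (‖g‖ * ‖zz - xp‖) ≤ η zz := by
      have e1 := hηeq zz
      have b1 := hmh' (c zz)
      have b2 : (Lb * ε + 1) * ⟪g, zz - xp⟫ ≤ (Lb * ε + 1) * (‖g‖ * ‖zz - xp‖) :=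
        mul_le_mul_of_nonneg_left hip (by positivity)
      have b3 : ν / 2 * ‖zz - xp‖ ^ 2 ≤ μ * ‖zz - xp‖ ^ 2 := by
        apply mul_le_mul_of_nonneg_right _ (by positivity)
        rw [hμdef]; linarith
      have b4 : (0:ℝ) ≤ σ * ‖zz - xp‖ := by positivity
      rw [e1]; linarith
    have hRK : (‖g‖ * (Lb * ε + 1) + 1 + (h (c xp) - mh)) * (2 / ν) ≤ R := le_max_right _ _
    have h2 : ‖g‖ * (Lb * ε + 1) + 1 + (h (c xp) - mh) ≤ ν / 2 * R := by
      have h2' := mul_le_mul_of_nonneg_left hRK (by positivity : (0:ℝ) ≤ ν / 2)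
      have e2 : ν / 2 * ((‖g‖ * (Lb * ε + 1) + 1 + (h (c xp) - mh)) * (2 / ν))
          = ‖g‖ * (Lb * ε + 1) + 1 + (h (c xp) - mh) := by
        field_simp
      rw [e2] at h2'
      exact h2'
    have h3 : ν / 2 * ‖zz - xp‖ ^ 2 - (Lb * ε + 1) * (‖g‖ * ‖zz - xp‖)
        ≥ 1 + (h (c xp) - mh) := by
      have hfac : ν / 2 * ‖zz - xp‖ - (Lb * ε + 1) * ‖g‖ ≥ 1 + (h (c xp) - mh) := by
        have : ν / 2 * R ≤ ν / 2 * ‖zz - xp‖ := mul_le_mul_of_nonneg_left hzz.le (by positivity)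
        nlinarith [h2]
      have hfacpos : (0:ℝ) ≤ 1 + (h (c xp) - mh) := by
        have := hmh' (c xp); linarith
      have ht1 : (1:ℝ) ≤ ‖zz - xp‖ := le_trans hR1 hzz.le
      nlinarith [hfac, ht1, hfacpos]
    rw [hηxp]
    linarith
  have hballne : (Metric.closedBall xp R).Nonempty :=
    ⟨xp, by simp [Metric.mem_closedBall]; linarith⟩
  obtain ⟨zs, hzsmem, hzsmin⟩ := (isCompact_closedBall xp R).exists_isMinOn hballne
    hηcont.continuousOn
  have hxpball : xp ∈ Metric.closedBall xp R := by simp [Metric.mem_closedBall]; linarith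
  have hmin : ∀ zz, η zs ≤ η zz := by
    intro zz
    by_cases hzz : zz ∈ Metric.closedBall xp R
    · exact (isMinOn_iff.mp hzsmin) zz hzz
    · have hd : R < ‖zz - xp‖ := by
        rw [Metric.mem_closedBall, not_le, dist_eq_norm] at hzz
        exact hzz
      exact le_trans ((isMinOn_iff.mp hzsmin) xp hxpball) (hcoer zz hd).le
  -- bound on r = ‖zs - xp‖
  have hrb : σ * ‖zs - xp‖ + ν / 2 * ‖zs - xp‖ ^ 2 ≤ Lb * ε ^ 2 * ‖g‖ ^ 2 := by
    have h1 := hClaim2 zs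
    have h2 := hmin xp
    rw [hηxp] at h2
    linarith
  have hrle : ‖zs - xp‖ ≤ ε * ‖g‖ := by
    by_contra hcon
    push_neg at hcon
    have h1 : σ * (ε * ‖g‖) ≤ σ * ‖zs - xp‖ := mul_le_mul_of_nonneg_left hcon.le hσ0
    have h2 : ν / 2 * (ε * ‖g‖) ^ 2 < ν / 2 * ‖zs - xp‖ ^ 2 := by
      have : (ε * ‖g‖) ^ 2 < ‖zs - xp‖ ^ 2 := by
        apply pow_lt_pow_left₀ hcon (by positivity)
        norm_num
      exact mul_lt_mul_of_pos_left this (by positivity)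
    have e1 : σ * (ε * ‖g‖) = Lb * ε ^ 2 * ‖g‖ ^ 2 := by rw [hσdef]; ring
    have h3 : (0:ℝ) ≤ ν / 2 * (ε * ‖g‖) ^ 2 := by positivity
    linarith
  -- the directional inequality at the exact minimizer zs
  have hdir : ∀ d : EuclideanSpace ℝ (Fin n), ∀ t : ℝ, 0 < t →
      ⟪(Lb * ε + 1) • g - (2 * μ) • (zs - xp), d⟫ - σ * ‖d‖ - (μ + Lb / 2) * ‖d‖ ^ 2 * t
        ≤ (h (c zs + t • ((c' zs) d)) - h (c zs)) / t := by
    intro d t ht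
    clear_value Lb ν σ μ u xp
    have hmin' := hmin (zs + t • d)
    have e0 : zs + t • d - xp = (zs - xp) + t • d := by abel
    have e1 : ‖(zs - xp) + t • d‖ ^ 2
        = ‖zs - xp‖ ^ 2 + 2 * (t * ⟪zs - xp, d⟫) + t ^ 2 * ‖d‖ ^ 2 := by
      rw [norm_add_sq_real, real_inner_smul_right, norm_smul, Real.norm_eq_abs, abs_of_pos ht]
      ring
    have e2 : ⟪g, (zs - xp) + t • d⟫ = ⟪g, zs - xp⟫ + t * ⟪g, d⟫ := by
      rw [inner_add_right, real_inner_smul_right]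
    have e3 : σ * ‖(zs - xp) + t • d‖ ≤ σ * ‖zs - xp‖ + σ * (t * ‖d‖) := by
      have b1 : ‖(zs - xp) + t • d‖ ≤ ‖zs - xp‖ + t * ‖d‖ := by
        calc ‖(zs - xp) + t • d‖ ≤ ‖zs - xp‖ + ‖t • d‖ := norm_add_le _ _
        _ = ‖zs - xp‖ + t * ‖d‖ := by rw [norm_smul, Real.norm_eq_abs, abs_of_pos ht]
      have := mul_le_mul_of_nonneg_left b1 hσ0
      linarith [this]
    have e4 : h (c (zs + t • d)) ≤ h (c zs + t • ((c' zs) d)) + Lb / 2 * (t ^ 2 * ‖d‖ ^ 2) := by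
      have t1 := taylor_bound c c' hc hβ zs (zs + t • d)
      have e5 : zs + t • d - zs = t • d := add_sub_cancel_left zs _
      rw [e5] at t1
      have e6 : (c' zs) (t • d) = t • ((c' zs) d) := map_smul _ _ _
      have l1 := hLiph (c (zs + t • d)) (c zs + t • ((c' zs) d))
      have e7 : c (zs + t • d) - (c zs + t • ((c' zs) d))
          = c (zs + t • d) - c zs - (c' zs) (t • d) := by rw [e6]; abel
      rw [e7] at l1
      have hns : ‖t • d‖ ^ 2 = t ^ 2 * ‖d‖ ^ 2 := by
        rw [norm_smul, Real.norm_eq_abs, abs_of_pos ht, mul_pow]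
      rw [hns] at t1
      have l2 : (L:ℝ) * ‖c (zs + t • d) - c zs - (c' zs) (t • d)‖
          ≤ (L:ℝ) * ((β:ℝ) / 2 * (t ^ 2 * ‖d‖ ^ 2)) :=
        mul_le_mul_of_nonneg_left t1 (by positivity)
      rw [hLbdef]
      nlinarith [l1, l2]
    have hexp : h (c zs) + μ * ‖zs - xp‖ ^ 2 - (Lb * ε + 1) * ⟪g, zs - xp⟫ + σ * ‖zs - xp‖
        ≤ h (c (zs + t • d)) + μ * ‖(zs - xp) + t • d‖ ^ 2
          - (Lb * ε + 1) * ⟪g, (zs - xp) + t • d⟫ + σ * ‖(zs - xp) + t • d‖ := by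
      rw [hηeq zs, hηeq (zs + t • d), e0] at hmin'
      exact hmin'
    have eζ : ⟪(Lb * ε + 1) • g - (2 * μ) • (zs - xp), d⟫
        = (Lb * ε + 1) * ⟪g, d⟫ - 2 * μ * ⟪zs - xp, d⟫ := by
      rw [inner_sub_left, real_inner_smul_left, real_inner_smul_left]
    rw [eζ, le_div_iff₀ ht]
    have f1 : μ * ‖(zs - xp) + t • d‖ ^ 2 = μ * ‖zs - xp‖ ^ 2 + 2 * μ * (t * ⟪zs - xp, d⟫)
        + μ * (t ^ 2 * ‖d‖ ^ 2) := by rw [e1]; ring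
    have f2 : (Lb * ε + 1) * ⟪g, (zs - xp) + t • d⟫
        = (Lb * ε + 1) * ⟪g, zs - xp⟫ + (Lb * ε + 1) * (t * ⟪g, d⟫) := by rw [e2]; ring
    have comb1 : h (c zs) ≤ h (c (zs + t • d)) + 2 * μ * (t * ⟪zs - xp, d⟫)
        + μ * (t ^ 2 * ‖d‖ ^ 2) - (Lb * ε + 1) * (t * ⟪g, d⟫) + σ * (t * ‖d‖) := by
      linarith only [hexp, f1, f2, e3]
    have comb2 : h (c zs) ≤ h (c zs + t • (c' zs) d) + Lb / 2 * (t ^ 2 * ‖d‖ ^ 2)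
        + 2 * μ * (t * ⟪zs - xp, d⟫) + μ * (t ^ 2 * ‖d‖ ^ 2)
        - (Lb * ε + 1) * (t * ⟪g, d⟫) + σ * (t * ‖d‖) := by
      generalize hX : h (c (zs + t • d)) = Xnew at comb1 e4
      generalize hY : h (c zs + t • (c' zs) d) = Xlin at e4 ⊢
      generalize hZ : h (c zs) = X0 at comb1 ⊢
      linarith only [comb1, e4]
    have e9 : ((Lb * ε + 1) * ⟪g, d⟫ - 2 * μ * ⟪zs - xp, d⟫ - σ * ‖d‖
          - (μ + Lb / 2) * ‖d‖ ^ 2 * t) * t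
        = (Lb * ε + 1) * (t * ⟪g, d⟫) - 2 * μ * (t * ⟪zs - xp, d⟫) - σ * (t * ‖d‖)
          - (Lb / 2 * (t ^ 2 * ‖d‖ ^ 2) + μ * (t ^ 2 * ‖d‖ ^ 2)) := by ring
    rw [e9]
    linarith only [comb2]
  -- project : a nearby element of the composite subdifferential at zs
  obtain ⟨π, hπmem, hπnear⟩ := exists_near_compSubdiff c c' hconv hL zs
    ((Lb * ε + 1) • g - (2 * μ) • (zs - xp)) σ ((μ + Lb / 2)) hσ0 (by positivity) hdir
  have hζnorm : ‖(Lb * ε + 1) • g - (2 * μ) • (zs - xp)‖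
      ≤ (Lb * ε + 1) * ‖g‖ + 2 * μ * ‖zs - xp‖ := by
    calc ‖(Lb * ε + 1) • g - (2 * μ) • (zs - xp)‖
        ≤ ‖(Lb * ε + 1) • g‖ + ‖(2 * μ) • (zs - xp)‖ := norm_sub_le _ _
    _ = (Lb * ε + 1) * ‖g‖ + 2 * μ * ‖zs - xp‖ := by
        rw [norm_smul, norm_smul, Real.norm_eq_abs, Real.norm_eq_abs,
          abs_of_pos (by positivity : (0:ℝ) < Lb * ε + 1), abs_of_pos (by positivity)]
  have hπnorm : ‖π‖ ≤ (Lb * ε + 1) * ‖g‖ + 2 * μ * ‖zs - xp‖ + σ := by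
    have e1 : π = ((Lb * ε + 1) • g - (2 * μ) • (zs - xp))
        - (((Lb * ε + 1) • g - (2 * μ) • (zs - xp)) - π) := by abel
    calc ‖π‖ = ‖((Lb * ε + 1) • g - (2 * μ) • (zs - xp))
        - (((Lb * ε + 1) • g - (2 * μ) • (zs - xp)) - π)‖ := by rw [← e1]
    _ ≤ ‖(Lb * ε + 1) • g - (2 * μ) • (zs - xp)‖
        + ‖((Lb * ε + 1) • g - (2 * μ) • (zs - xp)) - π‖ := norm_sub_le _ _
    _ ≤ (Lb * ε + 1) * ‖g‖ + 2 * μ * ‖zs - xp‖ + σ := by linarith [hζnorm, hπnear]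
  have hνε : ν * ε ≤ 1 := by
    rw [hνdef]
    have h1 : ε / εbar ≤ 1 := (div_le_one hεbar).mpr hεbar'.le
    calc 1 / εbar * ε = ε / εbar := by ring
    _ ≤ 1 := h1
  have hinfD : Metric.infDist 0 (compSubdiff c c' h zs) ≤ (3 * Lb * ε + 2) * ‖g‖ := by
    have h1 : Metric.infDist 0 (compSubdiff c c' h zs) ≤ ‖π‖ := by
      have h0 := Metric.infDist_le_dist_of_mem
        (x := (0 : EuclideanSpace ℝ (Fin n))) hπmem
      rwa [dist_zero_left] at h0
    have h2 : 2 * μ * ‖zs - xp‖ ≤ (Lb + ν) * (ε * ‖g‖) := by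
      have e1 : 2 * μ = Lb + ν := by rw [hμdef]; ring
      rw [e1]
      exact mul_le_mul_of_nonneg_left hrle (by positivity)
    have h3 : ν * (ε * ‖g‖) ≤ 1 * ‖g‖ := by
      have := mul_le_mul_of_nonneg_right hνε (norm_nonneg g)
      calc ν * (ε * ‖g‖) = ν * ε * ‖g‖ := by ring
      _ ≤ 1 * ‖g‖ := this
    have h4 : σ = Lb * ε * ‖g‖ := hσdef
    nlinarith [h1, hπnorm, h2, h3]
  by_cases hcase : 2 * (ε * ‖g‖) < τ₀ / 2
  · have hzsxbar : ‖zs - xbar‖ < τ₀ := by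
      have e : zs - xbar = (zs - xp) + (xp - x) + (x - xbar) := by abel
      have h1 : ‖zs - xbar‖ ≤ ‖zs - xp‖ + ‖xp - x‖ + ‖x - xbar‖ := by
        rw [e]
        calc ‖(zs - xp) + (xp - x) + (x - xbar)‖
            ≤ ‖(zs - xp) + (xp - x)‖ + ‖x - xbar‖ := norm_add_le _ _
        _ ≤ ‖zs - xp‖ + ‖xp - x‖ + ‖x - xbar‖ := by linarith [norm_add_le (zs - xp) (xp - x)]
      have h2 : ‖xp - x‖ = ε * ‖g‖ := by
        have e2 : xp - x = -(ε • g) := by rw [hxpdef]; abel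
        rw [e2, norm_neg, norm_smul, Real.norm_eq_abs, abs_of_pos hε0]
      have hg0 : (0:ℝ) ≤ ε * ‖g‖ := by positivity
      linarith [hrle]
    have hsubz := hsub zs hzsxbar
    have h3 : Metric.infDist zs {z | (0 : EuclideanSpace ℝ (Fin n)) ∈ compSubdiff c c' h z}
        ≤ κ * ((3 * Lb * ε + 2) * ‖g‖) :=
      le_trans hsubz (mul_le_mul_of_nonneg_left hinfD hκ.le)
    have h4 : Metric.infDist x {z | (0 : EuclideanSpace ℝ (Fin n)) ∈ compSubdiff c c' h z}
        ≤ Metric.infDist zs {z | (0 : EuclideanSpace ℝ (Fin n)) ∈ compSubdiff c c' h z}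
          + dist x zs := Metric.infDist_le_infDist_add_dist
    have h5 : dist x zs ≤ 2 * (ε * ‖g‖) := by
      rw [dist_eq_norm]
      have e : x - zs = (x - xp) - (zs - xp) := by abel
      have h6 : ‖x - xp‖ = ε * ‖g‖ := by
        have e2 : x - xp = ε • g := by rw [hxpdef]; abel
        rw [e2, norm_smul, Real.norm_eq_abs, abs_of_pos hε0]
      calc ‖x - zs‖ = ‖(x - xp) - (zs - xp)‖ := by rw [← e]
      _ ≤ ‖x - xp‖ + ‖zs - xp‖ := norm_sub_le _ _
      _ ≤ 2 * (ε * ‖g‖) := by rw [h6]; linarith [hrle]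
    have e7 : ((3 * (L:ℝ) * (β:ℝ) * ε + 2) * κ + 2 * ε) * ‖g‖
        = κ * ((3 * Lb * ε + 2) * ‖g‖) + 2 * (ε * ‖g‖) := by rw [hLbdef]; ring
    rw [e7]
    linarith
  · push_neg at hcase
    have h1 : Metric.infDist x {z | (0 : EuclideanSpace ℝ (Fin n)) ∈ compSubdiff c c' h z}
        ≤ dist x xbar := Metric.infDist_le_dist_of_mem hxbarS
    have h2 : dist x xbar < τ₀ / 2 := by rw [dist_eq_norm]; exact hx
    have h3 : (0:ℝ) ≤ (3 * (L:ℝ) * (β:ℝ) * ε + 2) * κ * ‖g‖ := by positivity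
    have e : ((3 * (L:ℝ) * (β:ℝ) * ε + 2) * κ + 2 * ε) * ‖g‖
        = (3 * (L:ℝ) * (β:ℝ) * ε + 2) * κ * ‖g‖ + 2 * (ε * ‖g‖) := by ring
    rw [e]
    linarith
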